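/- Let T > 0 and p ∈ [0, 1/2). There exists a constant C > 0 such that for every positive integer N with h := T/N < 1, one has |Σ_{m≥1} λ_m^{-p} [ (1 - (1+λ_m h)^{-2N})/(2λ_m + λ_m² h) - (1 - e^{-2λ_m T})/(2λ_m) ]| ≤ C h^{p+1/2}. (This is the spectral form of the weak error bound |E|X^N(T)|²_{H^{-p}} - E|X(T)|²_{H^{-p}}| ≤ C h^{p+1/2} for the implicit Euler scheme of the stochastic heat equation, since E|X^N(T)|²_{H^{-p}} = Σ_{m≥1} λ_m^{-p} (1 - (1+λ_m h)^{-2N})/(2λ_m + λ_m² h) and E|X(T)|²_{H^{-p}} = Σ_{m≥1} λ_m^{-p} (1 - e^{-2λ_m T})/(2λ_m).) -/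

import Mathlib

open Real

noncomputable def lam (m : ℕ) : ℝ := (Real.pi * m) ^ 2 / 2


lemma pow_sub_pow_le' (a b : ℝ) (ha : 0 ≤ a) (hab : a ≤ b) :
    ∀ n : ℕ, b ^ (n+1) - a ^ (n+1) ≤ (n+1 : ℝ) * b ^ n * (b - a) := by
  intro n
  induction n with
  | zero => simp
  | succ n ih =>
    have hb : 0 ≤ b := ha.trans hab
    have h1 : b ^ (n+2) - a ^ (n+2) = b * (b ^ (n+1) - a ^ (n+1)) + a ^ (n+1) * (b - a) := by
      ring
    have h2 : a ^ (n+1) ≤ b ^ (n+1) := pow_le_pow_left₀ ha hab _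
    have e : ((n+1 : ℕ) + 1 : ℝ) = (n+2 : ℝ) := by push_cast; ring
    rw [e]
    calc b ^ (n+2) - a ^ (n+2) = b * (b ^ (n+1) - a ^ (n+1)) + a ^ (n+1) * (b - a) := h1
      _ ≤ b * ((n+1 : ℝ) * b ^ n * (b - a)) + b ^ (n+1) * (b - a) := by
          have h3 := mul_le_mul_of_nonneg_left ih hb
          have h4 := mul_le_mul_of_nonneg_right h2 (by linarith : (0:ℝ) ≤ b - a)
          linarith
      _ = (n+2 : ℝ) * b ^ (n+1) * (b - a) := by ring

lemma exp_le_quadratic {x : ℝ} (h0 : 0 ≤ x) (h1 : x ≤ 1) : exp x ≤ 1 + x + x^2 := by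
  have h := Real.exp_bound' h0 h1 (n := 2) (by norm_num)
  have he : (∑ m ∈ Finset.range 2, x ^ m / m.factorial) = 1 + x := by
    simp [Finset.sum_range_succ]
  rw [he] at h
  have : x ^ 2 * (↑(2:ℕ) + 1) / (↑(Nat.factorial 2) * ↑(2:ℕ)) = (3/4) * x^2 := by
    norm_num [Nat.factorial]; ring
  norm_num [Nat.factorial] at h
  nlinarith

lemma delta_bound {x : ℝ} (hx0 : 0 < x) (hx1 : x ≤ 1) (N : ℕ) (hN : 0 < N) :
    ((1+x)^(2*N))⁻¹ - (exp (-(2*x)))^N ≤ 10 * x := by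
  obtain ⟨n, rfl⟩ : ∃ n, N = n + 1 := ⟨N - 1, (Nat.succ_pred_eq_of_pos hN).symm⟩
  set a := exp (-(2*x)) with ha_def
  set b := ((1+x)^2)⁻¹ with hb_def
  have h1x : (0:ℝ) < 1 + x := by linarith
  have hsq : (0:ℝ) < (1+x)^2 := by positivity
  have ha : 0 < a := exp_pos _
  have hexp : 1 + x ≤ exp x := by linarith [Real.add_one_le_exp x]
  have hsq_exp : (1+x)^2 ≤ exp (2*x) := by
    have h2 : exp (2*x) = exp x ^ 2 := by
      rw [← Real.exp_nat_mul]; norm_num [mul_comm]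
    rw [h2]
    have h0 : (0:ℝ) ≤ 1 + x := h1x.le
    nlinarith [Real.add_one_le_exp x, Real.exp_pos x]
  have hab : a ≤ b := by
    rw [ha_def, hb_def, Real.exp_neg]
    exact inv_anti₀ hsq hsq_exp
  have hb1 : b ≤ 1 := by
    rw [hb_def]
    rw [inv_le_one_iff₀]
    right; nlinarith
  -- rewrite the power
  have hP : ((1+x)^(2*(n+1)))⁻¹ = b ^ (n+1) := by
    rw [hb_def, inv_pow, ← pow_mul]
  rw [hP]
  -- b - a ≤ 5 x^2
  have hba : b - a ≤ 5 * x^2 := by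
    have key : b - a = a * b * (exp (2*x) - (1+x)^2) := by
      have hE : a = (exp (2*x))⁻¹ := by rw [ha_def, Real.exp_neg]
      have h1 : exp (2*x) ≠ 0 := (exp_pos _).ne'
      have h2 : ((1:ℝ)+x)^2 ≠ 0 := hsq.ne'
      rw [hE, hb_def]
      field_simp
    have h1 : exp (2*x) - (1+x)^2 ≤ 5 * x^2 := by
      have h2 : exp (2*x) = exp x ^ 2 := by rw [← Real.exp_nat_mul]; norm_num [mul_comm]
      have h3 := exp_le_quadratic hx0.le hx1
      have h4 : exp x ^ 2 ≤ (1 + x + x^2)^2 := by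
        nlinarith [Real.exp_pos x]
      have hx3 : x^3 ≤ x^2 := by nlinarith
      have hx4 : x^4 ≤ x^2 := by nlinarith
      nlinarith
    have hab1 : a * b ≤ 1 := by
      have : a ≤ 1 := by
        rw [ha_def, Real.exp_le_one_iff]; nlinarith
      nlinarith [ha.le, hb1, inv_pos.mpr hsq]
    have hpos : 0 ≤ exp (2*x) - (1+x)^2 := by linarith [hsq_exp]
    calc b - a = a * b * (exp (2*x) - (1+x)^2) := key
      _ ≤ 1 * (exp (2*x) - (1+x)^2) := by
          apply mul_le_mul_of_nonneg_right hab1 hpos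
      _ ≤ 5 * x^2 := by linarith
  -- b^n ≤ (1 + n x)⁻¹
  have hbn : b ^ n ≤ (1 + n * x)⁻¹ := by
    have hber : 1 + (n:ℝ) * x ≤ (1+x)^n := by
      have := one_add_mul_le_pow (a := x) (by linarith) n
      linarith
    have h2n : (1+x)^n ≤ (1+x)^(2*n) := by
      apply pow_le_pow_right₀ (by linarith) (by omega)
    have hpos : (0:ℝ) < 1 + n * x := by positivity
    have hrw : b ^ n = ((1+x)^(2*n))⁻¹ := by rw [hb_def, inv_pow, ← pow_mul]
    rw [hrw]
    exact inv_anti₀ hpos (hber.trans h2n)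
  have hmain := pow_sub_pow_le' a b ha.le hab n
  have hbn_pos : (0:ℝ) < 1 + n * x := by positivity
  have hfinal : ((n:ℝ)+1) * b^n * (b - a) ≤ 10 * x := by
    have hb0 : (0:ℝ) ≤ b := le_trans ha.le hab
    have h1 : ((n:ℝ)+1) * b^n * (b - a) ≤ ((n:ℝ)+1) * (1 + n*x)⁻¹ * (5*x^2) := by
      apply mul_le_mul
      · apply mul_le_mul_of_nonneg_left hbn (by positivity)
      · exact hba
      · linarith [hab]
      · positivity
    have h2 : ((n:ℝ)+1) * (1 + n*x)⁻¹ * (5*x^2) ≤ 10 * x := by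
      rw [mul_comm ((n:ℝ)+1) (1 + (n:ℝ)*x)⁻¹, mul_assoc]
      rw [inv_mul_le_iff₀ hbn_pos]
      have hn0 : (0:ℝ) ≤ n := Nat.cast_nonneg n
      nlinarith
    linarith
  linarith

set_option maxHeartbeats 1000000 in
lemma key_bound (l h : ℝ) (hl : 0 < l) (hh : 0 < h) (N : ℕ) (hN : 0 < N) :
    0 ≤ (1 - exp (-2*l*((N:ℝ)*h))) / (2*l) - (1 - ((1 + l*h)^(2*N))⁻¹) / (2*l + l^2*h)
    ∧ (1 - exp (-2*l*((N:ℝ)*h))) / (2*l) - (1 - ((1 + l*h)^(2*N))⁻¹) / (2*l + l^2*h)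
      ≤ 6 * min 1 (l*h) / l := by
  have hx : 0 < l * h := mul_pos hl hh
  set x := l * h with hx_def
  set E := exp (-2*l*((N:ℝ)*h)) with hE_def
  set P := ((1 + x)^(2*N))⁻¹ with hP_def
  set D := 2*l + l^2*h with hD_def
  have hDe : D = 2*l + l*x := by rw [hD_def, hx_def]; ring
  have hD0 : 0 < D := by rw [hDe]; positivity
  have h2l : 0 < 2*l := by positivity
  have hlD : 2*l ≤ D := by rw [hDe]; nlinarith
  have h1x : (0:ℝ) < 1 + x := by linarith
  have hEeq : E = (exp (-(2*x)))^N := by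
    rw [hE_def, ← Real.exp_nat_mul]
    congr 1
    rw [hx_def]; ring
  have hE0 : 0 < E := exp_pos _
  have hE1 : E ≤ 1 := by
    rw [hE_def, Real.exp_le_one_iff]
    have : (0:ℝ) ≤ (N:ℝ) := Nat.cast_nonneg N
    nlinarith
  have hP0 : 0 < P := by rw [hP_def]; positivity
  have hP1 : P ≤ 1 := by
    rw [hP_def, inv_le_one_iff₀]
    right
    apply one_le_pow₀
    linarith
  have hEP : E ≤ P := by
    rw [hEeq, hP_def, pow_mul, ← inv_pow]
    apply pow_le_pow_left₀ (exp_pos _).le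
    rw [Real.exp_neg]
    apply inv_anti₀ (by positivity)
    have h1 : 1 + x ≤ exp x := by linarith [Real.add_one_le_exp x]
    have h2 : exp (2*x) = exp x ^ 2 := by rw [← Real.exp_nat_mul]; norm_num [mul_comm]
    rw [h2]
    nlinarith [Real.exp_pos x]
  set m := min 1 x with hm_def
  have hm0 : 0 < m := lt_min one_pos hx
  have hm1 : m ≤ 1 := min_le_left _ _
  have hmx : m ≤ x := min_le_right _ _
  -- decomposition
  have hdecomp : (1 - E)/(2*l) - (1 - P)/D =
      (1 - E)*(l^2*h)/((2*l)*D) + (P - E)/D := by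
    rw [hD_def]
    field_simp
    ring
  constructor
  · rw [hdecomp]
    have t1 : 0 ≤ (1 - E)*(l^2*h)/((2*l)*D) := by
      apply div_nonneg _ (by positivity)
      exact mul_nonneg (by linarith) (by positivity)
    have t2 : 0 ≤ (P - E)/D := by
      apply div_nonneg _ hD0.le
      linarith
    linarith
  · rw [hdecomp]
    have c2 : P - E ≤ 10 * m := by
      rcases le_total x 1 with hx1 | hx1
      · have hmeq : m = x := min_eq_right hx1
        have := delta_bound hx hx1 N hN
        rw [← hEeq, ← hP_def] at this
        rw [hmeq]
        linarith
      · have hmeq : m = 1 := min_eq_left hx1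
        rw [hmeq]
        linarith
    have c4 : (1 - E)*(l^2*h)/((2*l)*D) ≤ m/(2*l) := by
      rw [div_le_div_iff₀ (by positivity) h2l]
      have hq : (0:ℝ) ≤ l^3*h*E := mul_nonneg (by positivity) hE0.le
      have hc : (0:ℝ) < l^3*h := by positivity
      have hquad : (0:ℝ) ≤ l^4*h^2 := by positivity
      have hA : (0:ℝ) ≤ (l^2*h)*(2*l) := by positivity
      have step1 : (1 - E)*(l^2*h)*(2*l) ≤ (l^2*h)*(2*l) := by
        nlinarith [mul_nonneg hE0.le hA]
      rcases le_total x 1 with hx1 | hx1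
      · have hmeq : m = x := min_eq_right hx1
        rw [hmeq, hDe, hx_def]
        have step2 : (l^2*h)*(2*l) ≤ l*h*(2*l*(2*l + l*(l*h))) := by
          nlinarith [hc, hquad]
        linarith
      · have hmeq : m = 1 := min_eq_left hx1
        rw [hmeq, hDe, hx_def]
        have step2 : (l^2*h)*(2*l) ≤ 1*(2*l*(2*l + l*(l*h))) := by
          nlinarith [sq_nonneg l, hc]
        linarith
    have c5 : (P - E)/D ≤ (10*m)/(2*l) := by
      exact div_le_div₀ (by positivity) c2 h2l hlD
    have : m/(2*l) + 10*m/(2*l) ≤ 6*m/l := by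
      rw [← add_div, div_le_div_iff₀ h2l hl]
      nlinarith [mul_nonneg hm0.le hl.le]
    linarith

lemma head_term (p : ℝ) (hp0 : 0 ≤ p) (hp : p < 1/2) (m : ℕ) :
    (1-2*p) * ((m:ℝ)+1)^(-(2*p)) ≤ ((m:ℝ)+1)^(1-2*p) - (m:ℝ)^(1-2*p) := by
  set t : ℝ := (m:ℝ) with ht_def
  have ht : 0 ≤ t := Nat.cast_nonneg m
  have ht1 : (0:ℝ) < t + 1 := by linarith
  set s : ℝ := 1 - 2*p with hs_def
  have hs0 : 0 < s := by rw [hs_def]; linarith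
  have hs1 : s ≤ 1 := by rw [hs_def]; linarith
  have h1 : t = (t+1)*(1 - 1/(t+1)) := by field_simp; ring
  have hnn : 0 ≤ 1 - 1/(t+1) := by
    have : 1/(t+1) ≤ 1 := by
      rw [div_le_one ht1]; linarith
    linarith
  have h2 : t^s = (t+1)^s * (1 - 1/(t+1))^s := by
    rw [← Real.mul_rpow ht1.le hnn, ← h1]
  have hber : (1 - 1/(t+1))^s ≤ 1 - s*(1/(t+1)) := by
    have hbase : (-1:ℝ) ≤ -(1/(t+1)) := by
      have : 1/(t+1) ≤ 1 := by rw [div_le_one ht1]; linarith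
      linarith
    have := rpow_one_add_le_one_add_mul_self (s := -(1/(t+1))) hbase hs0.le hs1
    have he : (1 + -(1/(t+1))) = 1 - 1/(t+1) := by ring
    rw [he] at this
    calc (1 - 1/(t+1))^s ≤ 1 + s * -(1/(t+1)) := this
      _ = 1 - s*(1/(t+1)) := by ring
  have h3 : t^s ≤ (t+1)^s - s*(t+1)^(s-1) := by
    have hP : (0:ℝ) ≤ (t+1)^s := (Real.rpow_pos_of_pos ht1 s).le
    have h4 : (t+1)^s * (1 - 1/(t+1))^s ≤ (t+1)^s * (1 - s*(1/(t+1))) :=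
      mul_le_mul_of_nonneg_left hber hP
    have h5 : (t+1)^s * (1 - s*(1/(t+1))) = (t+1)^s - s*(t+1)^(s-1) := by
      rw [Real.rpow_sub_one ht1.ne' s]
      field_simp
    rw [h2]
    rw [h5] at h4
    exact h4
  have he2 : (t+1)^(s-1) = (t+1)^(-(2*p)) := by
    congr 1
    rw [hs_def]; ring
  rw [he2] at h3
  rw [hs_def] at h3 ⊢
  linarith

lemma head_sum (p : ℝ) (hp0 : 0 ≤ p) (hp : p < 1/2) (M : ℕ) :
    ∑ m ∈ Finset.range M, ((m:ℝ)+1)^(-(2*p)) ≤ (M:ℝ)^(1-2*p) / (1-2*p) := by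
  have hs : (0:ℝ) < 1-2*p := by linarith
  rw [le_div_iff₀ hs]
  have key : ∀ m ∈ Finset.range M, (1-2*p) * ((m:ℝ)+1)^(-(2*p)) ≤
      ((((m+1:ℕ)):ℝ))^(1-2*p) - (((m:ℕ)):ℝ)^(1-2*p) := by
    intro m _
    have := head_term p hp0 hp m
    push_cast
    linarith
  calc (∑ m ∈ Finset.range M, ((m:ℝ)+1)^(-(2*p))) * (1-2*p)
      = ∑ m ∈ Finset.range M, (1-2*p) * ((m:ℝ)+1)^(-(2*p)) := by
        rw [Finset.sum_mul]; congr 1; ext m; ring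
    _ ≤ ∑ m ∈ Finset.range M, ((((m+1:ℕ)):ℝ)^(1-2*p) - ((m:ℕ):ℝ)^(1-2*p)) :=
        Finset.sum_le_sum key
    _ = ((M:ℕ):ℝ)^(1-2*p) - ((0:ℕ):ℝ)^(1-2*p) :=
        Finset.sum_range_sub (fun k : ℕ => ((k:ℕ):ℝ)^(1-2*p)) M
    _ ≤ (M:ℝ)^(1-2*p) := by
        simp [Real.zero_rpow hs.ne']

lemma tail_sum (M : ℕ) (hM : 0 < M) :
    ∑' j : ℕ, (((M:ℝ) + (j:ℝ) + 1)^2)⁻¹ ≤ (M:ℝ)⁻¹ := by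
  have hM1 : (1:ℝ) ≤ (M:ℝ) := by exact_mod_cast hM
  apply Real.tsum_le_of_sum_range_le
  · intro n; positivity
  · intro K
    have key : ∀ j ∈ Finset.range K, (((M:ℝ) + (j:ℝ) + 1)^2)⁻¹ ≤
        ((M:ℝ) + (j:ℕ))⁻¹ - ((M:ℝ) + ((j+1:ℕ):ℝ))⁻¹ := by
      intro j _
      have ha : (1:ℝ) ≤ (M:ℝ) + j := by
        have : (0:ℝ) ≤ (j:ℝ) := Nat.cast_nonneg j
        linarith
      have ha0 : (0:ℝ) < (M:ℝ) + j := by linarith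
      have ha1 : (0:ℝ) < (M:ℝ) + j + 1 := by linarith
      have heq : ((M:ℝ) + (j:ℕ))⁻¹ - ((M:ℝ) + ((j+1:ℕ):ℝ))⁻¹
          = (((M:ℝ)+j) * ((M:ℝ)+j+1))⁻¹ := by
        push_cast
        rw [eq_comm]
        field_simp
        ring
      rw [heq]
      apply inv_anti₀ (by positivity)
      nlinarith
    calc ∑ j ∈ Finset.range K, (((M:ℝ) + (j:ℝ) + 1)^2)⁻¹
        ≤ ∑ j ∈ Finset.range K, (((M:ℝ) + (j:ℕ))⁻¹ - ((M:ℝ) + ((j+1:ℕ):ℝ))⁻¹) :=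
          Finset.sum_le_sum key
      _ = ((M:ℝ) + ((0:ℕ):ℝ))⁻¹ - ((M:ℝ) + ((K:ℕ):ℝ))⁻¹ :=
          Finset.sum_range_sub' (fun k : ℕ => ((M:ℝ) + (k:ℝ))⁻¹) K
      _ ≤ (M:ℝ)⁻¹ := by
          have : (0:ℝ) ≤ ((M:ℝ) + (K:ℝ))⁻¹ := by positivity
          simp only [Nat.cast_zero, add_zero]
          linarith

lemma sq_rpow_neg (x : ℝ) (hx : 0 ≤ x) (p : ℝ) : (x^2)^(-p) = x^(-(2*p)) := by
  rw [← Real.rpow_two, ← Real.rpow_mul hx]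
  ring_nf

lemma min_five (y : ℝ) (hy : 0 ≤ y) : min 1 (5*y) ≤ 5 * min 1 y := by
  rcases le_total y 1 with h | h
  · rw [min_eq_right h]
    exact min_le_right _ _
  · rw [min_eq_left h]
    calc min 1 (5*y) ≤ 1 := min_le_left _ _
      _ ≤ 5 := by norm_num
      _ = 5 * 1 := by ring

lemma lam_eq (m : ℕ) : lam (m+1) = Real.pi^2 * ((m:ℝ)+1)^2 / 2 := by
  unfold lam
  push_cast
  ring

lemma lam_pos (m : ℕ) : 0 < lam (m+1) := by
  rw [lam_eq]
  have := Real.pi_pos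
  positivity

lemma q_le_lam (m : ℕ) : ((m:ℝ)+1)^2 ≤ lam (m+1) := by
  rw [lam_eq]
  have h3 : (3:ℝ) < Real.pi := Real.pi_gt_three
  have h9 : (9:ℝ) < Real.pi^2 := by nlinarith
  nlinarith [mul_nonneg (by linarith : (0:ℝ) ≤ Real.pi^2 - 2) (sq_nonneg ((m:ℝ)+1))]

lemma lam_le_5q (m : ℕ) : lam (m+1) ≤ 5 * ((m:ℝ)+1)^2 := by
  rw [lam_eq]
  have h3 : Real.pi < 3.15 := by
    have := Real.pi_lt_d2
    linarith
  have h0 := Real.pi_pos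
  have h10 : Real.pi^2 < 10 := by nlinarith
  nlinarith [mul_nonneg (by linarith : (0:ℝ) ≤ 10 - Real.pi^2) (sq_nonneg ((m:ℝ)+1))]

lemma base_summable : Summable (fun m : ℕ => (((m:ℝ)+1)^2)⁻¹) := by
  have h1 : Summable (fun n : ℕ => 1 / (n:ℝ)^2) :=
    summable_one_div_nat_pow.mpr (by norm_num)
  have h2 := (summable_nat_add_iff 1).mpr h1
  apply h2.congr
  intro n
  push_cast
  rw [one_div]

/-- Spectral form of the weak error bound for the implicit Euler scheme of the
stochastic heat equation in negative Sobolev spaces `H^{-p}`, `p ∈ [0, 1/2)`. -/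
theorem stmt_0 (T : ℝ) (hT : 0 < T) (p : ℝ) (hp0 : 0 ≤ p) (hp : p < 1 / 2) :
    ∃ C : ℝ, 0 < C ∧ ∀ N : ℕ, 0 < N → T / N < 1 →
      |∑' m : ℕ,
          lam (m + 1) ^ (-p) *
            ((1 - ((1 + lam (m + 1) * (T / N)) ^ (2 * N))⁻¹) /
                (2 * lam (m + 1) + lam (m + 1) ^ 2 * (T / N)) -
              (1 - Real.exp (-2 * lam (m + 1) * T)) / (2 * lam (m + 1)))| ≤
        C * (T / N) ^ (p + 1 / 2) := by
  have hs : (0:ℝ) < 1 - 2*p := by linarith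
  refine ⟨30 * (2/(1-2*p) + 1), by positivity, ?_⟩
  intro N hN hh1
  set h : ℝ := T / N with hh_def
  have hNr : (0:ℝ) < (N:ℝ) := by exact_mod_cast hN
  have hh : 0 < h := div_pos hT hNr
  have hTN : (N:ℝ) * h = T := by
    rw [hh_def]; field_simp
  -- the nonneg summand g and comparison c
  set g : ℕ → ℝ := fun m => lam (m+1) ^ (-p) *
      ((1 - Real.exp (-2 * lam (m+1) * T)) / (2 * lam (m+1)) -
       (1 - ((1 + lam (m+1) * h) ^ (2*N))⁻¹) / (2 * lam (m+1) + lam (m+1)^2 * h))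
    with hg_def
  set c : ℕ → ℝ := fun m =>
      ((((m:ℝ)+1)^2)^(-p)) * ((((m:ℝ)+1)^2)⁻¹) * min 1 (((m:ℝ)+1)^2 * h) with hc_def
  have key : ∀ m : ℕ, 0 ≤ (1 - Real.exp (-2 * lam (m+1) * T)) / (2 * lam (m+1)) -
       (1 - ((1 + lam (m+1) * h) ^ (2*N))⁻¹) / (2 * lam (m+1) + lam (m+1)^2 * h)
       ∧ (1 - Real.exp (-2 * lam (m+1) * T)) / (2 * lam (m+1)) -
       (1 - ((1 + lam (m+1) * h) ^ (2*N))⁻¹) / (2 * lam (m+1) + lam (m+1)^2 * h)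
       ≤ 6 * min 1 (lam (m+1) * h) / lam (m+1) := by
    intro m
    have := key_bound (lam (m+1)) h (lam_pos m) hh N hN
    rw [hTN] at this
    exact this
  have hrp : ∀ m : ℕ, 0 ≤ lam (m+1) ^ (-p) :=
    fun m => (Real.rpow_pos_of_pos (lam_pos m) _).le
  have hg0 : ∀ m, 0 ≤ g m := by
    intro m
    exact mul_nonneg (hrp m) (key m).1
  have hc0 : ∀ m, 0 ≤ c m := by
    intro m
    have h1 : (0:ℝ) < ((m:ℝ)+1)^2 := by positivity
    have h2 : (0:ℝ) ≤ min 1 (((m:ℝ)+1)^2 * h) := le_min (by norm_num) (by positivity)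
    exact mul_nonneg (mul_nonneg (Real.rpow_pos_of_pos h1 _).le (by positivity)) h2
  have hgc : ∀ m, g m ≤ 30 * c m := by
    intro m
    set q : ℝ := ((m:ℝ)+1)^2 with hq_def
    have hq0 : (0:ℝ) < q := by rw [hq_def]; positivity
    have hq1 : (1:ℝ) ≤ q := by
      rw [hq_def]
      nlinarith [Nat.cast_nonneg (α := ℝ) m]
    have hql : q ≤ lam (m+1) := q_le_lam m
    have hl5 : lam (m+1) ≤ 5*q := lam_le_5q m
    have hrpow : lam (m+1) ^ (-p) ≤ q ^ (-p) :=
      Real.rpow_le_rpow_of_nonpos hq0 hql (by linarith)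
    have hmin : min 1 (lam (m+1) * h) ≤ 5 * min 1 (q*h) := by
      have h1 : lam (m+1) * h ≤ 5*(q*h) := by
        have := mul_le_mul_of_nonneg_right hl5 hh.le
        linarith
      calc min 1 (lam (m+1) * h) ≤ min 1 (5*(q*h)) :=
            min_le_min (le_refl 1) h1
        _ ≤ 5 * min 1 (q*h) := min_five _ (by positivity)
    have hdiv : 6 * min 1 (lam (m+1) * h) / lam (m+1) ≤ 30 * min 1 (q*h) / q := by
      rw [div_le_div_iff₀ (lam_pos m) hq0]
      have hm0 : 0 ≤ min 1 (q*h) := le_min (by norm_num) (by positivity)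
      have := mul_le_mul hmin hql hq0.le (by positivity : (0:ℝ) ≤ 5 * min 1 (q*h))
      nlinarith [mul_le_mul_of_nonneg_right hmin hq0.le,
        mul_le_mul_of_nonneg_left hql (by positivity : (0:ℝ) ≤ 30 * min 1 (q*h))]
    have hGF := (key m).2
    have hGF0 := (key m).1
    calc g m ≤ q ^ (-p) * (6 * min 1 (lam (m+1) * h) / lam (m+1)) := by
          rw [hg_def]
          exact mul_le_mul hrpow hGF hGF0 (Real.rpow_pos_of_pos hq0 _).le
      _ ≤ q ^ (-p) * (30 * min 1 (q*h) / q) :=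
          mul_le_mul_of_nonneg_left hdiv (Real.rpow_pos_of_pos hq0 _).le
      _ = 30 * c m := by
          rw [hc_def, hq_def]
          field_simp
  -- summability
  have hcb : ∀ m, c m ≤ (((m:ℝ)+1)^2)⁻¹ := by
    intro m
    have h1 : (1:ℝ) ≤ ((m:ℝ)+1)^2 := by nlinarith [Nat.cast_nonneg (α := ℝ) m]
    have h2 : (((m:ℝ)+1)^2) ^ (-p) ≤ 1 :=
      Real.rpow_le_one_of_one_le_of_nonpos h1 (by linarith)
    have h3 : min 1 (((m:ℝ)+1)^2 * h) ≤ 1 := min_le_left _ _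
    have h4 : (0:ℝ) ≤ (((m:ℝ)+1)^2)⁻¹ := by positivity
    calc c m = (((m:ℝ)+1)^2) ^ (-p) * ((((m:ℝ)+1)^2)⁻¹) * min 1 (((m:ℝ)+1)^2 * h) := rfl
      _ ≤ 1 * ((((m:ℝ)+1)^2)⁻¹) * 1 := by
          apply mul_le_mul _ h3 (le_min (by norm_num) (by positivity)) (by positivity)
          exact mul_le_mul_of_nonneg_right h2 h4
      _ = (((m:ℝ)+1)^2)⁻¹ := by ring
  have csum : Summable c := Summable.of_nonneg_of_le hc0 hcb base_summable
  have gsum : Summable g := Summable.of_nonneg_of_le hg0 hgc (csum.mul_left 30)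
  -- relate to the statement's sum
  have hfg : (fun m : ℕ => lam (m + 1) ^ (-p) *
            ((1 - ((1 + lam (m + 1) * (T / N)) ^ (2 * N))⁻¹) /
                (2 * lam (m + 1) + lam (m + 1) ^ 2 * (T / N)) -
              (1 - Real.exp (-2 * lam (m + 1) * T)) / (2 * lam (m + 1))))
      = fun m => -(g m) := by
    funext m
    rw [hg_def]
    ring
  rw [hfg, tsum_neg, abs_neg, abs_of_nonneg (tsum_nonneg hg0)]
  -- bound ∑' g by 30 * ∑' c
  have hgle : ∑' m, g m ≤ 30 * ∑' m, c m := by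
    have := Summable.tsum_le_tsum hgc gsum (csum.mul_left 30)
    rwa [tsum_mul_left] at this
  -- now bound ∑' c
  set r : ℝ := h ^ (-(1/2) : ℝ) with hr_def
  have hr0 : 0 < r := Real.rpow_pos_of_pos hh _
  have hr1 : 1 < r := by
    rw [hr_def]
    rw [Real.one_lt_rpow_iff_of_pos hh]
    right
    constructor
    · rw [hh_def]; exact hh1
    · norm_num
  set M : ℕ := ⌈r⌉₊ with hM_def
  have hM0 : 0 < M := Nat.ceil_pos.mpr hr0
  have hrM : r ≤ (M:ℝ) := Nat.le_ceil r
  have hM2r : (M:ℝ) ≤ 2*r := by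
    have := Nat.ceil_lt_add_one hr0.le
    rw [← hM_def] at this
    linarith
  have hMr : (1:ℝ) ≤ (M:ℝ) := by exact_mod_cast hM0
  -- split
  have hsplit := (csum.sum_add_tsum_nat_add M).symm
  -- head bound
  have hhead : ∑ i ∈ Finset.range M, c i ≤ 2 * h^(p+1/2) / (1-2*p) := by
    have hper : ∀ i ∈ Finset.range M, c i ≤ h * ((i:ℝ)+1)^(-(2*p)) := by
      intro i _
      have hq0 : (0:ℝ) < ((i:ℝ)+1)^2 := by positivity
      have h2 : min 1 (((i:ℝ)+1)^2 * h) ≤ ((i:ℝ)+1)^2 * h := min_le_right _ _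
      calc c i ≤ ((((i:ℝ)+1)^2)^(-p)) * ((((i:ℝ)+1)^2)⁻¹) * (((i:ℝ)+1)^2 * h) := by
            apply mul_le_mul_of_nonneg_left h2
            positivity
        _ = ((((i:ℝ)+1)^2)^(-p)) * h := by
            field_simp
        _ = h * ((i:ℝ)+1)^(-(2*p)) := by
            rw [sq_rpow_neg ((i:ℝ)+1) (by positivity) p]
            ring
    calc ∑ i ∈ Finset.range M, c i ≤ ∑ i ∈ Finset.range M, h * ((i:ℝ)+1)^(-(2*p)) :=
          Finset.sum_le_sum hper
      _ = h * ∑ i ∈ Finset.range M, ((i:ℝ)+1)^(-(2*p)) := by rw [Finset.mul_sum]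
      _ ≤ h * ((M:ℝ)^(1-2*p) / (1-2*p)) := by
          apply mul_le_mul_of_nonneg_left (head_sum p hp0 hp M) hh.le
      _ ≤ 2 * h^(p+1/2) / (1-2*p) := by
          have e1 : (M:ℝ)^(1-2*p) ≤ (2*r)^(1-2*p) :=
            Real.rpow_le_rpow (Nat.cast_nonneg M) hM2r (by linarith)
          have e2 : (2*r)^(1-2*p) = 2^(1-2*p) * r^(1-2*p) :=
            Real.mul_rpow (by norm_num) hr0.le
          have e3 : (2:ℝ)^(1-2*p) ≤ 2 := by
            calc (2:ℝ)^(1-2*p) ≤ (2:ℝ)^(1:ℝ) :=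
                  Real.rpow_le_rpow_of_exponent_le (by norm_num) (by linarith)
              _ = 2 := Real.rpow_one 2
          have e4 : r^(1-2*p) = h^(p-1/2) := by
            rw [hr_def, ← Real.rpow_mul hh.le]
            congr 1; ring
          have e5 : h * h^(p-1/2) = h^(p+1/2) := by
            nth_rewrite 1 [← Real.rpow_one h]
            rw [← Real.rpow_add hh]
            congr 1; ring
          have e6 : (M:ℝ)^(1-2*p) ≤ 2 * h^(p-1/2) := by
            have hrs : 0 ≤ r^(1-2*p) := (Real.rpow_pos_of_pos hr0 _).le
            calc (M:ℝ)^(1-2*p) ≤ 2^(1-2*p) * r^(1-2*p) := by rw [← e2]; exact e1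
              _ ≤ 2 * r^(1-2*p) := mul_le_mul_of_nonneg_right e3 hrs
              _ = 2 * h^(p-1/2) := by rw [e4]
          have e7 : h * (M:ℝ)^(1-2*p) ≤ 2 * h^(p+1/2) := by
            calc h * (M:ℝ)^(1-2*p) ≤ h * (2 * h^(p-1/2)) :=
                  mul_le_mul_of_nonneg_left e6 hh.le
              _ = 2 * (h * h^(p-1/2)) := by ring
              _ = 2 * h^(p+1/2) := by rw [e5]
          rw [← mul_div_assoc]
          gcongr
  -- tail bound
  have htail : ∑' i, c (i+M) ≤ h^(p+1/2) := by
    have hbound : ∀ i : ℕ, c (i+M) ≤ (M:ℝ)^(-(2*p)) * (((M:ℝ)+(i:ℝ)+1)^2)⁻¹ := by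
      intro i
      have hx_eq : ((((i+M:ℕ)):ℝ)+1) = (M:ℝ)+(i:ℝ)+1 := by push_cast; ring
      have hx0 : (0:ℝ) < (M:ℝ)+(i:ℝ)+1 := by positivity
      have hMx : (M:ℝ) ≤ (M:ℝ)+(i:ℝ)+1 := by
        have : (0:ℝ) ≤ (i:ℝ) := Nat.cast_nonneg i
        linarith
      have hM0' : (0:ℝ) < (M:ℝ) := by exact_mod_cast hM0
      have hr1' : ((((M:ℝ)+(i:ℝ)+1)^2)^(-p)) = ((M:ℝ)+(i:ℝ)+1)^(-(2*p)) :=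
        sq_rpow_neg _ hx0.le p
      have hr2 : ((M:ℝ)+(i:ℝ)+1)^(-(2*p)) ≤ (M:ℝ)^(-(2*p)) :=
        Real.rpow_le_rpow_of_nonpos hM0' hMx (by linarith)
      have hmin1 : min 1 ((((M:ℝ)+(i:ℝ)+1)^2) * h) ≤ 1 := min_le_left _ _
      have hinv : (0:ℝ) ≤ ((((M:ℝ)+(i:ℝ)+1)^2))⁻¹ := by positivity
      calc c (i+M) = ((((M:ℝ)+(i:ℝ)+1)^2)^(-p)) * ((((M:ℝ)+(i:ℝ)+1)^2)⁻¹) *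
              min 1 ((((M:ℝ)+(i:ℝ)+1)^2) * h) := by
            rw [hc_def]
            simp only [← hx_eq]
        _ ≤ ((((M:ℝ)+(i:ℝ)+1)^2)^(-p)) * ((((M:ℝ)+(i:ℝ)+1)^2)⁻¹) * 1 := by
            apply mul_le_mul_of_nonneg_left hmin1
            apply mul_nonneg (Real.rpow_pos_of_pos (by positivity) _).le hinv
        _ ≤ (M:ℝ)^(-(2*p)) * (((M:ℝ)+(i:ℝ)+1)^2)⁻¹ := by
            rw [mul_one, hr1']
            exact mul_le_mul_of_nonneg_right hr2 hinv
    have s1 : Summable (fun i : ℕ => c (i+M)) := (summable_nat_add_iff M).2 csum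
    have s2 : Summable (fun i : ℕ => (((M:ℝ)+(i:ℝ)+1)^2)⁻¹) := by
      have hsh := (summable_nat_add_iff (f := fun m : ℕ => (((m:ℝ)+1)^2)⁻¹) M).2 base_summable
      apply hsh.congr
      intro i
      push_cast
      ring_nf
    have hM0' : (0:ℝ) < (M:ℝ) := by exact_mod_cast hM0
    calc ∑' i : ℕ, c (i+M) ≤ ∑' i : ℕ, (M:ℝ)^(-(2*p)) * (((M:ℝ)+(i:ℝ)+1)^2)⁻¹ :=
          Summable.tsum_le_tsum hbound s1 (s2.mul_left _)
      _ = (M:ℝ)^(-(2*p)) * ∑' i : ℕ, (((M:ℝ)+(i:ℝ)+1)^2)⁻¹ := tsum_mul_left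
      _ ≤ (M:ℝ)^(-(2*p)) * (M:ℝ)⁻¹ :=
          mul_le_mul_of_nonneg_left (tail_sum M hM0) (Real.rpow_pos_of_pos hM0' _).le
      _ = (M:ℝ)^(-(2*p+1)) := by
          rw [← Real.rpow_neg_one (M:ℝ), ← Real.rpow_add hM0']
          congr 1; ring
      _ ≤ r^(-(2*p+1)) := Real.rpow_le_rpow_of_nonpos hr0 hrM (by linarith)
      _ = h^(p+1/2) := by
          rw [hr_def, ← Real.rpow_mul hh.le]
          congr 1; ring
  -- put it together
  have hcsum : ∑' m, c m ≤ 2 * h^(p+1/2) / (1-2*p) + h^(p+1/2) := by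
    rw [hsplit]
    exact add_le_add hhead htail
  have hfinal : 30 * ∑' m, c m ≤ 30 * (2/(1-2*p) + 1) * h^(p+1/2) := by
    have hC : 30 * (2 * h^(p+1/2) / (1-2*p) + h^(p+1/2)) = 30*(2/(1-2*p)+1) * h^(p+1/2) := by
      field_simp
    calc 30 * ∑' m, c m ≤ 30 * (2 * h^(p+1/2) / (1-2*p) + h^(p+1/2)) := by linarith
      _ = 30*(2/(1-2*p)+1) * h^(p+1/2) := hC
  linarith
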